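/- arXiv:2601.21731 — 3 statements merged into one kernel-verified Lean document; each statement's English description precedes it below -/
import Mathlib

section
/- Let N ≥ 1, let K be an N×N real positive semidefinite matrix, and let c > 0. Let γ_K denote the centered multivariate Gaussian measure on ℝ^N with covariance matrix K, and let T : ℝ^N → ℝ^N be the empirical-variance normalization map. Then the pushforward of γ_K under T equals the pushforward of γ_{cK} under T. In particular, no statistic of the normalized observation vector can distinguish the covariance K from cK, so the covariance (and hence the spectral weights of a stationary kernel) is identifiable from a single normalized realization only up to a common multiplicative constant. -/
open MeasureTheory ProbabilityTheory Matrix Real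

/-- The standard Gaussian measure on `ℝ^N` (product of `N` standard normals). -/
noncomputable def stdGaussianPi (N : ℕ) : Measure (Fin N → ℝ) :=
  Measure.pi fun _ => gaussianReal 0 1

/-- The positive semidefinite square root of a positive semidefinite matrix
(restored: removed from Mathlib; this is its former definition). -/
noncomputable def Matrix.PosSemidef.sqrt {n : Type*} [Fintype n] [DecidableEq n]
    {A : Matrix n n ℝ} (hA : A.PosSemidef) : Matrix n n ℝ :=
  hA.1.eigenvectorUnitary.1 * diagonal ((↑) ∘ (√·) ∘ hA.1.eigenvalues) *
    (star hA.1.eigenvectorUnitary : Matrix n n ℝ)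

/-- The centered multivariate Gaussian measure on `ℝ^N` with positive semidefinite
covariance matrix `K`, realized as the pushforward of the standard Gaussian under
multiplication by the positive semidefinite square root of `K`.  Its covariance
bilinear form is `(u, v) ↦ uᵀ K v`. -/
noncomputable def centeredGaussian {N : ℕ} (K : Matrix (Fin N) (Fin N) ℝ)
    (hK : K.PosSemidef) : Measure (Fin N → ℝ) :=
  (stdGaussianPi N).map fun x => hK.sqrt.mulVec x

/-- The empirical-variance normalization map `T(v) = (v - v̄·1) / ‖v - v̄·1‖₂`,
with the convention `T v = 0` when `v - v̄·1 = 0` (the inverse of `0` is `0`). -/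
noncomputable def empNormalize (N : ℕ) (v : Fin N → ℝ) : Fin N → ℝ :=
  (Real.sqrt (∑ i, (v i - (∑ j, v j) / N) ^ 2))⁻¹ • fun i => v i - (∑ j, v j) / N


lemma empNormalize_smul (N : ℕ) (a : ℝ) (ha : 0 < a) (v : Fin N → ℝ) :
    empNormalize N (a • v) = empNormalize N v := by
  unfold empNormalize
  have key : ∀ i, a * v i - (∑ j, a * v j) / N = a * (v i - (∑ j, v j) / N) := by
    intro i
    rw [← Finset.mul_sum, mul_sub, mul_div_assoc]
  simp only [Pi.smul_apply, smul_eq_mul]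
  have hsum : (∑ i, (a * v i - (∑ j, a * v j) / N) ^ 2)
      = a ^ 2 * ∑ i, (v i - (∑ j, v j) / N) ^ 2 := by
    simp_rw [key, mul_pow, Finset.mul_sum]
  rw [hsum, Real.sqrt_mul (by positivity), Real.sqrt_sq ha.le, mul_inv]
  funext i
  simp only [key]
  calc a⁻¹ * (Real.sqrt (∑ i, (v i - (∑ j, v j) / N) ^ 2))⁻¹ * (a * (v i - (∑ j, v j) / N))
      = (a⁻¹ * a) * ((Real.sqrt (∑ i, (v i - (∑ j, v j) / N) ^ 2))⁻¹ * (v i - (∑ j, v j) / N)) := by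
        ring
    _ = _ := by simp [inv_mul_cancel₀ ha.ne']

lemma measurable_empNormalize (N : ℕ) : Measurable (empNormalize N) := by
  unfold empNormalize
  refine Measurable.smul (f := fun v : Fin N → ℝ => (Real.sqrt (∑ i, (v i - (∑ j, v j) / N) ^ 2))⁻¹) (g := fun v i => v i - (∑ j, v j) / N) ?_ ?_
  · exact (Real.continuous_sqrt.measurable.comp (by fun_prop)).inv
  · fun_prop

lemma measurable_mulVec {N : ℕ} (M : Matrix (Fin N) (Fin N) ℝ) :
    Measurable fun x : Fin N → ℝ => M.mulVec x := by
  unfold Matrix.mulVec dotProduct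
  fun_prop

lemma sqrt_smul_eq {N : ℕ} (K : Matrix (Fin N) (Fin N) ℝ) (hK : K.PosSemidef)
    (c : ℝ) (hc : 0 < c) (hcK : (c • K).PosSemidef) :
    hcK.sqrt = Real.sqrt c • hK.sqrt := by
  have e : ∀ {M : Matrix (Fin N) (Fin N) ℝ} (h : M.PosSemidef), h.sqrt = cfc Real.sqrt M := by
    intro M h
    rw [h.1.cfc_eq]
    simp [Matrix.PosSemidef.sqrt, IsHermitian.cfc, Unitary.conjStarAlgAut_apply, Function.comp_def]
  have hsa : IsSelfAdjoint K := hK.1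
  rw [e, e, ← cfc_comp_smul c Real.sqrt K, ← cfc_const_mul (Real.sqrt c) Real.sqrt K]
  congr 1
  funext x
  exact Real.sqrt_mul hc.le x

/-- **Single-realization non-identifiability of the covariance scale.**
For any `N ≥ 1`, any positive semidefinite covariance `K` and any `c > 0`, the
pushforward of the centered Gaussian `γ_K` under the empirical-variance
normalization map equals that of `γ_{cK}`: no statistic of the normalized
observation can distinguish `K` from `c • K`. -/
theorem pushforward_empNormalize_eq_of_smul
    {N : ℕ} (hN : 1 ≤ N) (K : Matrix (Fin N) (Fin N) ℝ) (hK : K.PosSemidef)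
    (c : ℝ) (hc : 0 < c) (hcK : (c • K).PosSemidef) :
    (centeredGaussian K hK).map (empNormalize N) =
      (centeredGaussian (c • K) hcK).map (empNormalize N) := by
  unfold centeredGaussian
  rw [Measure.map_map (measurable_empNormalize N) (measurable_mulVec _),
      Measure.map_map (measurable_empNormalize N) (measurable_mulVec _)]
  congr 1
  funext x
  simp only [Function.comp_apply, sqrt_smul_eq K hK c hc hcK, Matrix.smul_mulVec]
  rw [empNormalize_smul N _ (Real.sqrt_pos.mpr hc)]
end

section
/- Let Q ≥ 1 and let (μ_1, σ_1), …, (μ_Q, σ_Q) be pairwise distinct pairs with σ_q > 0 for all q. If a_1, …, a_Q ∈ ℝ satisfy ∑_{q=1}^Q a_q · (1/(√(2π)·σ_q)) · exp(−(ω − μ_q)²/(2σ_q²)) = 0 for every ω ∈ ℝ, then a_q = 0 for all q. In particular, the weights of a Gaussian spectral mixture density with fixed distinct components are uniquely determined by the density function. -/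
open Real Filter

private lemma tendsto_exp_quad (A B C : ℝ) (h : A < 0 ∨ (A = 0 ∧ B < 0)) :
    Tendsto (fun ω : ℝ => Real.exp (A * ω ^ 2 + B * ω + C)) atTop (nhds 0) := by
  have hb : Tendsto (fun ω : ℝ => A * ω ^ 2 + B * ω + C) atTop atBot := by
    rcases h with hA | ⟨hA, hB⟩
    · have h1 : Tendsto (fun ω : ℝ => A * ω + B) atTop atBot :=
        tendsto_atBot_add_const_right _ B (tendsto_id.const_mul_atTop_of_neg hA)
      have h2 : Tendsto (fun ω : ℝ => ω * (A * ω + B)) atTop atBot :=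
        Tendsto.atTop_mul_atBot₀ tendsto_id h1
      have h3 := tendsto_atBot_add_const_right _ C h2
      refine h3.congr fun ω => by ring
    · subst hA
      have h1 : Tendsto (fun ω : ℝ => B * ω + C) atTop atBot :=
        tendsto_atBot_add_const_right _ C (tendsto_id.const_mul_atTop_of_neg hB)
      refine h1.congr fun ω => by ring
  exact Real.tendsto_exp_atBot.comp hb

/-- **Linear independence of distinct Gaussian densities.**
If the pairs `(μ q, σ q)` are pairwise distinct with `σ q > 0`, and the linear
combination `∑ q, a q · (1/(√(2π)·σ q)) · exp(−(ω−μ q)²/(2σ q²))` vanishes for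
every `ω ∈ ℝ`, then all coefficients `a q` vanish.  In particular, the weights
of a Gaussian spectral mixture density with fixed distinct components are
uniquely determined by the density function. -/
theorem gaussian_mixture_weights_unique
    (Q : ℕ) (hQ : 1 ≤ Q) (μ σ : Fin Q → ℝ) (hσ : ∀ q, 0 < σ q)
    (hdist : Function.Injective fun q => (μ q, σ q))
    (a : Fin Q → ℝ)
    (h : ∀ ω : ℝ, ∑ q, a q * (1 / (Real.sqrt (2 * π) * σ q)) *
        Real.exp (-(ω - μ q) ^ 2 / (2 * σ q ^ 2)) = 0) :
    ∀ q, a q = 0 := by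
  by_contra hcon
  push_neg at hcon
  obtain ⟨q1, hq1⟩ := hcon
  -- the set of indices with nonzero coefficient
  set S : Finset (Fin Q) := Finset.univ.filter (fun q => a q ≠ 0) with hS
  have hq1S : q1 ∈ S := by simp [hS, hq1]
  obtain ⟨q0, hq0S, hq0max⟩ := S.exists_max_image
    (fun q => toLex (σ q, μ q)) ⟨q1, hq1S⟩
  have ha0 : a q0 ≠ 0 := by simpa [hS] using hq0S
  -- notation
  set c : Fin Q → ℝ := fun q => 1 / (Real.sqrt (2 * π) * σ q) with hc
  set E : Fin Q → ℝ → ℝ := fun q ω => -(ω - μ q) ^ 2 / (2 * σ q ^ 2) with hE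
  have hcpos : ∀ q, 0 < c q := by
    intro q
    have h1 : 0 < Real.sqrt (2 * π) := Real.sqrt_pos.2 (by positivity)
    have h2 := hσ q
    positivity
  -- the normalized function
  set g : ℝ → ℝ := fun ω => ∑ q, a q * (c q / c q0) * Real.exp (E q ω - E q0 ω)
    with hg
  have hgzero : ∀ ω, g ω = 0 := by
    intro ω
    have hdenom : (0 : ℝ) < c q0 * Real.exp (E q0 ω) := by
      have := hcpos q0; positivity
    have : g ω = (∑ q, a q * c q * Real.exp (E q ω)) / (c q0 * Real.exp (E q0 ω)) := by
      rw [Finset.sum_div]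
      refine Finset.sum_congr rfl fun q _ => ?_
      rw [Real.exp_sub]
      have h1 := (hcpos q0).ne'
      have h2 := (Real.exp_pos (E q0 ω)).ne'
      field_simp
    rw [this]
    have h0 := h ω
    have : (∑ q, a q * c q * Real.exp (E q ω)) = 0 := by
      simpa [hc, hE] using h0
    rw [this, zero_div]
  -- termwise limits
  have hterm : ∀ q ∈ Finset.univ (α := Fin Q),
      Tendsto (fun ω => a q * (c q / c q0) * Real.exp (E q ω - E q0 ω)) atTop
        (nhds (if q = q0 then a q0 else 0)) := by
    intro q _
    by_cases hqq : q = q0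
    · subst hqq
      simp only [if_pos rfl, sub_self, Real.exp_zero, mul_one,
        div_self (hcpos q).ne']
      exact tendsto_const_nhds
    · rw [if_neg hqq]
      by_cases haq : a q = 0
      · simp [haq]
      · -- q ∈ S, q ≠ q0, so lexicographically smaller
        have hqS : q ∈ S := by simp [hS, haq]
        have hle := hq0max q hqS
        have hne : toLex (σ q, μ q) ≠ toLex (σ q0, μ q0) := by
          intro heq
          apply hqq
          have heq' : (σ q, μ q) = (σ q0, μ q0) := heq
          have h1 : σ q = σ q0 := congrArg Prod.fst heq'
          have h2 : μ q = μ q0 := congrArg Prod.snd heq'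
          exact hdist (show (μ q, σ q) = (μ q0, σ q0) by rw [h1, h2])
        have hlt : toLex (σ q, μ q) < toLex (σ q0, μ q0) := lt_of_le_of_ne hle hne
        rw [Prod.Lex.lt_iff] at hlt
        -- E q ω - E q0 ω = A ω² + B ω + C
        have hσq := hσ q
        have hσ0 := hσ q0
        set A : ℝ := 1 / (2 * σ q0 ^ 2) - 1 / (2 * σ q ^ 2) with hA
        set B : ℝ := μ q / σ q ^ 2 - μ q0 / σ q0 ^ 2 with hB
        set Cc : ℝ := (μ q0) ^ 2 / (2 * σ q0 ^ 2) - (μ q) ^ 2 / (2 * σ q ^ 2) with hCc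
        have hEeq : ∀ ω, E q ω - E q0 ω = A * ω ^ 2 + B * ω + Cc := by
          intro ω
          simp only [hE, hA, hB, hCc]
          field_simp
          ring
        have hcase : A < 0 ∨ (A = 0 ∧ B < 0) := by
          rcases hlt with hσlt | ⟨hσeq, hμlt⟩
          · left
            rw [hA, sub_neg]
            apply one_div_lt_one_div_of_lt (by positivity)
            have : σ q < σ q0 := hσlt
            nlinarith
          · right
            have hσeq' : σ q = σ q0 := hσeq
            constructor
            · rw [hA, hσeq', sub_self]
            · rw [hB, hσeq', sub_neg, div_lt_div_iff_of_pos_right (by positivity)]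
              exact hμlt
        have hlim := tendsto_exp_quad A B Cc hcase
        have : Tendsto (fun ω => Real.exp (E q ω - E q0 ω)) atTop (nhds 0) := by
          refine hlim.congr fun ω => ?_
          rw [hEeq ω]
        have := this.const_mul (a q * (c q / c q0))
        simpa using this
  have hsum : Tendsto g atTop (nhds (∑ q, if q = q0 then a q0 else 0)) := by
    exact tendsto_finset_sum _ hterm
  have hsumval : (∑ q : Fin Q, if q = q0 then a q0 else 0) = a q0 := by
    simp
  rw [hsumval] at hsum
  have hzero : Tendsto g atTop (nhds 0) := by
    have : g = fun _ => 0 := funext hgzero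
    rw [this]; exact tendsto_const_nhds
  exact ha0 (tendsto_nhds_unique hsum hzero)
end

section
/- Let Q ≥ 1 and let (μ_1, σ_1), …, (μ_Q, σ_Q) be pairwise distinct pairs with μ_q ≥ 0 and σ_q > 0 for all q. If a_1, …, a_Q ∈ ℝ satisfy ∑_{q=1}^Q a_q · exp(−2π²σ_q²τ²) · cos(2π·μ_q·τ) = 0 for every τ ∈ ℝ, then a_q = 0 for all q. In particular, the spectral weights of a spectral mixture kernel with fixed distinct components are uniquely determined by the values of the stationary kernel k(τ) on all of ℝ. -/
open Real Filter

private lemma smk_quad_atBot {A B : ℝ} (h : A < 0 ∨ (A = 0 ∧ B < 0)) :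
    Tendsto (fun t : ℝ => A * t ^ 2 + B * t) atTop atBot := by
  rcases h with hA | ⟨hA, hB⟩
  · have h1 : Tendsto (fun t : ℝ => t * (A * t + B)) atTop atBot := by
      apply Tendsto.atTop_mul_atBot₀ tendsto_id
      exact (tendsto_id.const_mul_atTop_of_neg hA).atBot_add tendsto_const_nhds
    exact h1.congr fun t => by ring
  · have h1 : Tendsto (fun t : ℝ => B * t) atTop atBot :=
      tendsto_id.const_mul_atTop_of_neg hB
    exact h1.congr fun t => by rw [hA]; ring

private lemma smk_cosh_transfer (Q : ℕ) (c b a : Fin Q → ℝ)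
    (h : ∀ τ : ℝ, ∑ q, a q * Real.exp (-(c q * τ ^ 2)) * Real.cos (b q * τ) = 0) :
    ∀ t : ℝ, ∑ q, a q * Real.exp (c q * t ^ 2) * Real.cosh (b q * t) = 0 := by
  set F : ℂ → ℂ := fun z => ∑ q, (a q : ℂ) * Complex.exp (-((c q : ℂ) * z ^ 2)) *
      Complex.cos ((b q : ℂ) * z) with hFdef
  have hF : Differentiable ℂ F := by
    apply Differentiable.fun_sum
    intro q _
    exact ((differentiable_const _).mul (((differentiable_const _).mul
      (differentiable_pow 2)).neg.cexp)).mul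
      ((differentiable_const _).mul differentiable_id).ccos
  have hreal : ∀ x : ℝ, F x = 0 := by
    intro x
    have : F x = ((∑ q, a q * Real.exp (-(c q * x ^ 2)) * Real.cos (b q * x) : ℝ) : ℂ) := by
      rw [hFdef]
      push_cast [Complex.ofReal_exp, Complex.ofReal_cos]
      exact Finset.sum_congr rfl fun q _ => by ring
    rw [this, h x, Complex.ofReal_zero]
  have hF0 : ∀ z : ℂ, F z = 0 := by
    have hA : AnalyticOnNhd ℂ F Set.univ := fun z _ => hF.analyticAt z
    have hfreq : ∃ᶠ z in nhdsWithin (0 : ℂ) {(0:ℂ)}ᶜ, F z = 0 := by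
      have htend : Tendsto (fun n : ℕ => ((((n : ℝ) + 1)⁻¹ : ℝ) : ℂ)) atTop
          (nhdsWithin (0 : ℂ) {(0:ℂ)}ᶜ) := by
        apply tendsto_nhdsWithin_of_tendsto_nhds_of_eventually_within
        · have h1 : Tendsto (fun n : ℕ => ((n : ℝ) + 1)⁻¹) atTop (nhds 0) :=
            tendsto_one_div_add_atTop_nhds_zero_nat.congr (fun n => by rw [one_div])
          have h2 := (Complex.continuous_ofReal.tendsto 0).comp h1
          rw [Complex.ofReal_zero] at h2
          exact h2
        · filter_upwards with n
          simp only [Set.mem_compl_iff, Set.mem_singleton_iff]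
          exact Complex.ofReal_ne_zero.2 (by positivity)
      exact htend.frequently (Frequently.of_forall fun n => hreal _)
    have := hA.eqOn_zero_of_preconnected_of_frequently_eq_zero isPreconnected_univ
      (Set.mem_univ 0) hfreq
    intro z; exact this (Set.mem_univ z)
  intro t
  have := hF0 (t * Complex.I)
  rw [hFdef] at this
  simp only [mul_pow, Complex.I_sq, mul_comm (b _ : ℂ) (↑t * Complex.I)] at this
  have key : ((∑ q, a q * Real.exp (c q * t ^ 2) * Real.cosh (b q * t) : ℝ) : ℂ) = 0 := by
    rw [← this]
    push_cast [Complex.ofReal_exp, Complex.ofReal_cosh]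
    apply Finset.sum_congr rfl
    intro q _
    rw [show ((t:ℂ) * Complex.I * (b q:ℂ)) = ((b q * t : ℝ):ℂ) * Complex.I by push_cast; ring,
        Complex.cos_mul_I,
        show -((c q:ℂ) * ((t:ℂ)^2 * -1)) = (c q:ℂ) * (t:ℂ)^2 by ring]
    push_cast
    ring
  exact_mod_cast key

/-- **Linear independence of distinct spectral-mixture kernel components.**
If the pairs `(μ q, σ q)` are pairwise distinct with `μ q ≥ 0` and `σ q > 0`, and
the combination `∑ q, a q · exp(−2π²σ q²τ²) · cos(2π μ q τ)` vanishes for every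
`τ ∈ ℝ`, then all coefficients `a q` vanish.  In particular, the spectral weights
of a spectral mixture kernel with fixed distinct components are uniquely
determined by the values of the stationary kernel on all of `ℝ`. -/
theorem spectralMixtureKernel_weights_unique
    (Q : ℕ) (hQ : 1 ≤ Q) (μ σ : Fin Q → ℝ)
    (hμ : ∀ q, 0 ≤ μ q) (hσ : ∀ q, 0 < σ q)
    (hdist : Function.Injective fun q => (μ q, σ q))
    (a : Fin Q → ℝ)
    (h : ∀ τ : ℝ, ∑ q, a q * Real.exp (-(2 * π ^ 2 * σ q ^ 2 * τ ^ 2)) *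
        Real.cos (2 * π * μ q * τ) = 0) :
    ∀ q, a q = 0 := by
  set c : Fin Q → ℝ := fun q => 2 * π ^ 2 * σ q ^ 2 with hcdef
  set b : Fin Q → ℝ := fun q => 2 * π * μ q with hbdef
  have hbnn : ∀ q, 0 ≤ b q := fun q => by
    rw [hbdef]; have := pi_pos; have := hμ q; positivity
  have h' : ∀ τ : ℝ, ∑ q, a q * Real.exp (-(c q * τ ^ 2)) * Real.cos (b q * τ) = 0 := by
    intro τ
    rw [← h τ]
  have key := smk_cosh_transfer Q c b a h'
  by_contra hcon
  push_neg at hcon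
  obtain ⟨q0, hq0⟩ := hcon
  classical
  set S : Finset (Fin Q) := Finset.univ.filter (fun q => a q ≠ 0) with hSdef
  have hS : S.Nonempty := ⟨q0, by simp [hSdef, hq0]⟩
  obtain ⟨p, hpS, hpmax⟩ := S.exists_max_image (fun q => toLex (c q, b q)) hS
  have hap : a p ≠ 0 := by simpa [hSdef] using hpS
  set u : Fin Q → ℝ → ℝ := fun q t =>
    Real.exp ((c q - c p) * t ^ 2) * (Real.cosh (b q * t) * Real.exp (-(b p * t))) with hudef
  have hupos : ∀ q t, 0 < u q t := by
    intro q t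
    simp only [hudef]
    have := Real.cosh_pos (b q * t)
    positivity
  have husum : ∀ t : ℝ, ∑ q, a q * u q t = 0 := by
    intro t
    have h1 := key t
    calc ∑ q, a q * u q t
        = (∑ q, a q * Real.exp (c q * t ^ 2) * Real.cosh (b q * t)) *
            Real.exp (-(c p * t ^ 2) + -(b p * t)) := by
          rw [Finset.sum_mul]
          apply Finset.sum_congr rfl
          intro q _
          simp only [hudef]
          rw [show (c q - c p) * t ^ 2 = c q * t ^ 2 + -(c p * t ^ 2) by ring,
            Real.exp_add, Real.exp_add]
          ring
      _ = 0 := by rw [h1, zero_mul]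
  -- each non-maximal supported term tends to 0
  have hulim : ∀ q, q ∈ S → q ≠ p → Tendsto (u q) atTop (nhds 0) := by
    intro q hqS hqp
    have hle : toLex (c q, b q) ≤ toLex (c p, b p) := hpmax q hqS
    have hne : toLex (c q, b q) ≠ toLex (c p, b p) := by
      intro hEq
      rw [toLex_inj, Prod.ext_iff] at hEq
      obtain ⟨hc1, hb1⟩ := hEq
      dsimp only at hc1 hb1
      apply hqp
      apply hdist
      have hσeq : σ q = σ p := by
        have hc2 : 2 * π ^ 2 * σ q ^ 2 = 2 * π ^ 2 * σ p ^ 2 := by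
          simpa [hcdef] using hc1
        have hsq : σ q ^ 2 = σ p ^ 2 :=
          mul_left_cancel₀ (by positivity : (2 * π ^ 2 : ℝ) ≠ 0) hc2
        have h2 := congrArg Real.sqrt hsq
        rwa [Real.sqrt_sq (hσ q).le, Real.sqrt_sq (hσ p).le] at h2
      have hμeq : μ q = μ p := by
        have hb2 : 2 * π * μ q = 2 * π * μ p := by simpa [hbdef] using hb1
        exact mul_left_cancel₀ (by positivity : (2 * π : ℝ) ≠ 0) hb2
      simp [hσeq, hμeq]
    have hlt := lt_of_le_of_ne hle hne
    rw [Prod.Lex.lt_iff] at hlt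
    have hquad : Tendsto (fun t : ℝ => (c q - c p) * t ^ 2 + (b q - b p) * t) atTop atBot := by
      apply smk_quad_atBot
      rcases hlt with hclt | ⟨hceq, hblt⟩
      · left; dsimp at hclt; linarith
      · right; dsimp at hceq hblt; constructor <;> [linarith; linarith]
    have hexp : Tendsto (fun t : ℝ => Real.exp ((c q - c p) * t ^ 2 + (b q - b p) * t))
        atTop (nhds 0) := Real.tendsto_exp_atBot.comp hquad
    apply squeeze_zero' (Eventually.of_forall fun t => (hupos q t).le) _ hexp
    filter_upwards [eventually_ge_atTop (0 : ℝ)] with t ht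
    have hcosh : Real.cosh (b q * t) ≤ Real.exp (b q * t) := by
      rw [Real.cosh_eq]
      have h2 : Real.exp (-(b q * t)) ≤ Real.exp (b q * t) := by
        apply Real.exp_le_exp.2
        have := mul_nonneg (hbnn q) ht
        linarith
      linarith
    calc u q t ≤ Real.exp ((c q - c p) * t ^ 2) * (Real.exp (b q * t) * Real.exp (-(b p * t))) := by
          simp only [hudef]
          apply mul_le_mul_of_nonneg_left _ (Real.exp_nonneg _)
          exact mul_le_mul_of_nonneg_right hcosh (Real.exp_nonneg _)
      _ = Real.exp ((c q - c p) * t ^ 2 + (b q - b p) * t) := by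
          rw [← Real.exp_add, ← Real.exp_add]
          ring_nf
  -- sum over the rest tends to 0
  have hrest : Tendsto (fun t => ∑ q ∈ Finset.univ.erase p, a q * u q t) atTop (nhds 0) := by
    have : Tendsto (fun t => ∑ q ∈ Finset.univ.erase p, a q * u q t) atTop
        (nhds (∑ q ∈ Finset.univ.erase p, (0 : ℝ))) := by
      apply tendsto_finset_sum
      intro q hq
      rcases eq_or_ne (a q) 0 with ha | ha
      · simpa [ha] using (tendsto_const_nhds : Tendsto (fun _ : ℝ => (0:ℝ)) atTop (nhds 0))
      · have hqS : q ∈ S := by simp [hSdef, ha]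
        have hqp : q ≠ p := Finset.ne_of_mem_erase hq
        simpa using (hulim q hqS hqp).const_mul (a q)
    simpa using this
  have hterm : ∀ t : ℝ, a p * u p t = -∑ q ∈ Finset.univ.erase p, a q * u q t := by
    intro t
    have := husum t
    rw [← Finset.add_sum_erase Finset.univ (fun q => a q * u q t) (Finset.mem_univ p)] at this
    linarith
  have hPlim : Tendsto (fun t => a p * u p t) atTop (nhds 0) := by
    have := hrest.neg
    rw [neg_zero] at this
    exact this.congr fun t => (hterm t).symm
  have hub : ∀ t : ℝ, 0 ≤ t → |a p| ≤ 2 * |a p * u p t| := by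
    intro t ht
    have huhalf : (1:ℝ)/2 ≤ u p t := by
      simp only [hudef, sub_self, zero_mul, Real.exp_zero, one_mul]
      have h1 : Real.exp (b p * t) / 2 ≤ Real.cosh (b p * t) := by
        rw [Real.cosh_eq]
        have := Real.exp_pos (-(b p * t))
        linarith
      have h2 : Real.exp (b p * t) * Real.exp (-(b p * t)) = 1 := by
        rw [← Real.exp_add]; simp
      have h3 := Real.exp_pos (-(b p * t))
      calc (1:ℝ)/2 = Real.exp (b p * t) / 2 * Real.exp (-(b p * t)) := by
            rw [div_mul_eq_mul_div, h2]
        _ ≤ Real.cosh (b p * t) * Real.exp (-(b p * t)) :=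
            mul_le_mul_of_nonneg_right h1 h3.le
    rw [abs_mul, abs_of_pos (hupos p t)]
    nlinarith [abs_nonneg (a p)]
  have h2lim : Tendsto (fun t => 2 * |a p * u p t|) atTop (nhds 0) := by
    have := (hPlim.abs).const_mul (2:ℝ)
    simpa using this
  have hfinal : |a p| ≤ 0 :=
    ge_of_tendsto h2lim (eventually_atTop.2 ⟨0, fun t ht => hub t ht⟩)
  exact hap (abs_eq_zero.1 (le_antisymm hfinal (abs_nonneg _)))
end
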